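/- Let γ ∈ (0,1) and C > 0. Let u : ℝ² → ℝ be a C² function, 2π-periodic in its first variable x, harmonic on the open half-plane {(x,s) : s < 0} (i.e. ∂²u/∂x² + ∂²u/∂s² = 0 there), satisfying the decay bound |u(x,s)| ≤ C·e^{(1+γ)s} for all s ≤ 0, and suppose there exist real constants a, b, c with u(x,0) = a + b·cos(x) + c·sin(x) for all x ∈ ℝ. Then u(x,s) = 0 for all s ≤ 0. -/

import Mathlib

open Real MeasureTheory intervalIntegral Set Filter

lemma constOnIio (φ : ℝ → ℝ) (h : ∀ s < (0:ℝ), HasDerivAt φ 0 s)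
    {s t : ℝ} (ht : t < 0) (hst : s ≤ t) : φ t = φ s := by
  have hcont : ContinuousOn φ (Icc s t) := fun y hy =>
    ((h y (lt_of_le_of_lt hy.2 ht)).continuousAt).continuousWithinAt
  exact constant_of_has_deriv_right_zero hcont
    (fun y hy => ((h y (lt_of_le_of_lt hy.2.le ht)).hasDerivWithinAt)) t ⟨hst, le_refl t⟩

lemma constOnIio' (φ : ℝ → ℝ) (h : ∀ s < (0:ℝ), HasDerivAt φ 0 s)
    {s : ℝ} (hs : s < 0) : φ s = φ (-1) := by
  rcases le_or_gt s (-1) with h' | h'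
  · exact (constOnIio φ h (by norm_num) h').symm
  · exact constOnIio φ h hs h'.le

lemma expDeriv (c : ℝ) (s : ℝ) :
    HasDerivAt (fun s => Real.exp (c * s)) (c * Real.exp (c * s)) s := by
  refine ((Real.hasDerivAt_exp (c * s)).comp s ((hasDerivAt_id s).const_mul c)).congr_deriv ?_
  ring

lemma expDerivNeg (c : ℝ) (s : ℝ) :
    HasDerivAt (fun s => Real.exp (-(c * s))) (-c * Real.exp (-(c * s))) s := by
  have := (Real.hasDerivAt_exp (-(c * s))).comp s (((hasDerivAt_id s).const_mul c).neg)
  refine this.congr_deriv ?_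
  ring

/-- representation of solutions of v'' = l² v on (-∞,0) -/
lemma ode_rep (l : ℝ) (hl : 0 < l) (v w : ℝ → ℝ)
    (hv : ∀ s < (0:ℝ), HasDerivAt v (w s) s)
    (hw : ∀ s < (0:ℝ), HasDerivAt w (l ^ 2 * v s) s) :
    ∃ A B : ℝ, ∀ s < (0:ℝ), v s = A * Real.exp (l * s) + B * Real.exp (-(l * s)) := by
  set g : ℝ → ℝ := fun s => w s - l * v s with hg
  set φ : ℝ → ℝ := fun s => g s * Real.exp (l * s) with hφ
  have hφd : ∀ s < (0:ℝ), HasDerivAt φ 0 s := by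
    intro s hs
    have h1 : HasDerivAt g (l ^ 2 * v s - l * w s) s := (hw s hs).sub ((hv s hs).const_mul l)
    have := h1.mul (expDeriv l s)
    refine this.congr_deriv (Eq.symm ?_)
    simp only [hg]
    ring
  obtain ⟨K, hφK⟩ : ∃ K : ℝ, ∀ s < (0:ℝ), g s = K * Real.exp (-(l * s)) := by
    refine ⟨φ (-1), fun s hs => ?_⟩
    have h1 : g s * Real.exp (l * s) = φ (-1) := constOnIio' φ hφd hs
    have h3 : Real.exp (l*s) * Real.exp (-(l*s)) = 1 := by rw [← Real.exp_add]; simp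
    linear_combination Real.exp (-(l*s)) * h1 - g s * h3
  set ψ : ℝ → ℝ := fun s => v s * Real.exp (-(l * s)) + K / (2 * l) * Real.exp (-(2 * l * s))
    with hψ
  have hψd : ∀ s < (0:ℝ), HasDerivAt ψ 0 s := by
    intro s hs
    have := ((hv s hs).mul (expDerivNeg l s)).add ((expDerivNeg (2*l) s).const_mul (K / (2*l)))
    refine this.congr_deriv (Eq.symm ?_)
    have hgs := hφK s hs
    simp only [hg] at hgs
    have h2 : Real.exp (-(2*l*s)) = Real.exp (-(l*s)) * Real.exp (-(l*s)) := by
      rw [← Real.exp_add]; ring_nf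
    have hln : (2*l:ℝ) ≠ 0 := by positivity
    have hc : K / (2*l) * (-(2*l) * Real.exp (-(2*l*s))) = -K * Real.exp (-(2*l*s)) := by
      field_simp
    rw [hc, h2]
    linear_combination (-(Real.exp (-(l*s)))) * hgs
  refine ⟨ψ (-1), -K/(2*l), fun s hs => ?_⟩
  have h1 : v s * Real.exp (-(l * s)) + K / (2 * l) * Real.exp (-(2 * l * s)) = ψ (-1) :=
    constOnIio' ψ hψd hs
  have h3 : Real.exp (l*s) * Real.exp (-(l*s)) = 1 := by rw [← Real.exp_add]; simp
  have h2 : Real.exp (-(2*l*s)) = Real.exp (-(l*s)) * Real.exp (-(l*s)) := by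
    rw [← Real.exp_add]; ring_nf
  linear_combination Real.exp (l*s) * h1 - v s * h3 - (K/(2*l)) * Real.exp (l*s) * h2
    - (K/(2*l)) * Real.exp (-(l*s)) * h3

lemma tendstoInvAtBotZero : Filter.Tendsto (fun r : ℝ => r⁻¹) Filter.atBot (nhds 0) := by
  have h : Tendsto (fun r : ℝ => (-r)⁻¹) atBot (nhds 0) :=
    tendsto_inv_atTop_zero.comp tendsto_neg_atBot_atTop
  have h2 := h.neg
  simp only [inv_neg, neg_neg] at h2
  simpa using h2

lemma tendsto_exp_mul_atBot (M c : ℝ) (hc : 0 < c) :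
    Tendsto (fun s => M * Real.exp (c * s)) atBot (nhds 0) := by
  have h1 : Tendsto (fun s : ℝ => c * s) atBot atBot :=
    Tendsto.const_mul_atBot hc tendsto_id
  simpa using (Real.tendsto_exp_atBot.comp h1).const_mul M

lemma ode_vanish (l μ M : ℝ) (hl : 0 < l) (hμ : 0 < μ) (v w : ℝ → ℝ)
    (hv : ∀ s : ℝ, HasDerivAt v (w s) s)
    (hw : ∀ s < (0:ℝ), HasDerivAt w (l ^ 2 * v s) s)
    (hM : ∀ s ≤ (0:ℝ), |v s| ≤ M * Real.exp (μ * s))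
    (hcase : l < μ ∨ v 0 = 0) : ∀ s ≤ (0:ℝ), v s = 0 := by
  obtain ⟨A, B, hrep⟩ := ode_rep l hl v w (fun s _ => hv s) hw
  have hB : B = 0 := by
    have t1 : Tendsto (fun s => v s * Real.exp (l * s)) atBot (nhds 0) := by
      apply squeeze_zero_norm' (a := fun s => M * Real.exp ((μ + l) * s))
      · filter_upwards [eventually_le_atBot (0:ℝ)] with s hs
        have hms := hM s hs
        rw [Real.norm_eq_abs, abs_mul, abs_of_pos (Real.exp_pos _)]
        calc |v s| * Real.exp (l * s) ≤ (M * Real.exp (μ * s)) * Real.exp (l * s) :=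
              mul_le_mul_of_nonneg_right hms (Real.exp_pos _).le
          _ = M * Real.exp ((μ + l) * s) := by rw [mul_assoc, ← Real.exp_add]; ring_nf
      · exact tendsto_exp_mul_atBot M (μ + l) (by linarith)
    have t2 : Tendsto (fun s => v s * Real.exp (l * s)) atBot (nhds B) := by
      have heq : (fun s => A * Real.exp (2 * l * s) + B) =ᶠ[atBot]
          (fun s => v s * Real.exp (l * s)) := by
        filter_upwards [eventually_lt_atBot (0:ℝ)] with s hs
        rw [hrep s hs]
        have h3 : Real.exp (-(l*s)) * Real.exp (l*s) = 1 := by rw [← Real.exp_add]; simp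
        have h4 : Real.exp (l*s) * Real.exp (l*s) = Real.exp (2*l*s) := by
          rw [← Real.exp_add]; ring_nf
        linear_combination -A * h4 - B * h3
      have t3 : Tendsto (fun s => A * Real.exp (2 * l * s) + B) atBot (nhds (0 + B)) :=
        (tendsto_exp_mul_atBot A (2*l) (by linarith)).add tendsto_const_nhds
      rw [zero_add] at t3
      exact Tendsto.congr' heq t3
    exact tendsto_nhds_unique t2 t1
  have hv0 : v 0 = A := by
    have h0 : Tendsto v (nhdsWithin 0 (Iio 0)) (nhds (v 0)) :=
      ((hv 0).continuousAt).continuousWithinAt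
    have h1 : Tendsto (fun s => A * Real.exp (l * s)) (nhdsWithin 0 (Iio 0)) (nhds A) := by
      have hc : ContinuousAt (fun s : ℝ => A * Real.exp (l * s)) 0 := by fun_prop
      have h2 := hc.continuousWithinAt (s := Iio 0)
      simpa using h2.tendsto
    have heq : ∀ᶠ s in nhdsWithin (0:ℝ) (Iio 0), v s = A * Real.exp (l * s) := by
      filter_upwards [self_mem_nhdsWithin] with s hs
      rw [hrep s hs, hB]; ring
    exact tendsto_nhds_unique (h0.congr' heq) h1
  have hA : A = 0 := by
    rcases hcase with hlμ | hvz
    · have t1 : Tendsto (fun s => v s * Real.exp (-(l * s))) atBot (nhds 0) := by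
        apply squeeze_zero_norm' (a := fun s => M * Real.exp ((μ - l) * s))
        · filter_upwards [eventually_le_atBot (0:ℝ)] with s hs
          have hms := hM s hs
          rw [Real.norm_eq_abs, abs_mul, abs_of_pos (Real.exp_pos _)]
          calc |v s| * Real.exp (-(l * s)) ≤ (M * Real.exp (μ * s)) * Real.exp (-(l * s)) :=
                mul_le_mul_of_nonneg_right hms (Real.exp_pos _).le
            _ = M * Real.exp ((μ - l) * s) := by rw [mul_assoc, ← Real.exp_add]; ring_nf
        · exact tendsto_exp_mul_atBot M (μ - l) (by linarith)
      have t2 : Tendsto (fun s => v s * Real.exp (-(l * s))) atBot (nhds A) := by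
        have heq : (fun _ : ℝ => A) =ᶠ[atBot] (fun s => v s * Real.exp (-(l * s))) := by
          filter_upwards [eventually_lt_atBot (0:ℝ)] with s hs
          rw [hrep s hs, hB]
          have h3 : Real.exp (l*s) * Real.exp (-(l*s)) = 1 := by rw [← Real.exp_add]; simp
          linear_combination -A * h3
        exact Tendsto.congr' heq tendsto_const_nhds
      exact tendsto_nhds_unique t2 t1
    · rw [hvz] at hv0; exact hv0.symm
  intro s hs
  rcases lt_or_eq_of_le hs with h | h
  · rw [hrep s h, hA, hB]; ring
  · subst h; rw [hv0, hA]

lemma ode_vanish_zero (μ M : ℝ) (hμ : 0 < μ) (v w : ℝ → ℝ)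
    (hv : ∀ s : ℝ, HasDerivAt v (w s) s)
    (hw : ∀ s < (0:ℝ), HasDerivAt w 0 s)
    (hM : ∀ s ≤ (0:ℝ), |v s| ≤ M * Real.exp (μ * s)) : ∀ s ≤ (0:ℝ), v s = 0 := by
  have hwK : ∀ s < (0:ℝ), w s = w (-1) := fun s hs => constOnIio' w hw hs
  set K := w (-1) with hK
  have hlin : ∀ s < (0:ℝ), HasDerivAt (fun s => v s - K * s) 0 s := by
    intro s hs
    have hd := (hv s).sub ((hasDerivAt_id s).const_mul K)
    refine hd.congr_deriv (Eq.symm ?_)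
    rw [hwK s hs]; ring
  have hrep : ∀ s < (0:ℝ), v s = K * s + (v (-1) - K * (-1)) := by
    intro s hs
    have h2 := constOnIio' (fun s => v s - K * s) hlin hs
    linarith
  set L := v (-1) - K * (-1) with hL
  have t0 : Tendsto v atBot (nhds 0) := by
    apply squeeze_zero_norm' (a := fun s => M * Real.exp (μ * s))
    · filter_upwards [eventually_le_atBot (0:ℝ)] with s hs
      rw [Real.norm_eq_abs]; exact hM s hs
    · exact tendsto_exp_mul_atBot M μ hμ
  have hKz : K = 0 := by
    have t1 : Tendsto (fun s => v s * s⁻¹) atBot (nhds 0) := by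
      simpa using t0.mul tendstoInvAtBotZero
    have t2 : Tendsto (fun s => v s * s⁻¹) atBot (nhds K) := by
      have heq : (fun s : ℝ => K + L * s⁻¹) =ᶠ[atBot] (fun s => v s * s⁻¹) := by
        filter_upwards [eventually_lt_atBot (0:ℝ)] with s hs
        have hsne : s ≠ 0 := ne_of_lt hs
        rw [hrep s hs]
        field_simp
      have t3 : Tendsto (fun s : ℝ => K + L * s⁻¹) atBot (nhds (K + L * 0)) :=
        tendsto_const_nhds.add (tendsto_const_nhds.mul tendstoInvAtBotZero)
      rw [mul_zero, add_zero] at t3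
      exact Tendsto.congr' heq t3
    exact tendsto_nhds_unique t2 t1
  have hLz : L = 0 := by
    have t2 : Tendsto v atBot (nhds L) := by
      have heq : (fun _ : ℝ => L) =ᶠ[atBot] v := by
        filter_upwards [eventually_lt_atBot (0:ℝ)] with s hs
        rw [hrep s hs, hKz]; ring
      exact Tendsto.congr' heq tendsto_const_nhds
    exact tendsto_nhds_unique t2 t0
  have hvz : ∀ s < (0:ℝ), v s = 0 := by
    intro s hs; rw [hrep s hs, hKz, hLz]; ring
  intro s hs
  rcases lt_or_eq_of_le hs with h | h
  · exact hvz s h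
  · subst h
    have h0 : Tendsto v (nhdsWithin 0 (Iio 0)) (nhds (v 0)) :=
      ((hv 0).continuousAt).continuousWithinAt
    have heq : ∀ᶠ s in nhdsWithin (0:ℝ) (Iio 0), v s = 0 := by
      filter_upwards [self_mem_nhdsWithin] with t ht
      exact hvz t ht
    exact tendsto_nhds_unique (h0.congr' heq) tendsto_const_nhds


noncomputable def pd2 (F : ℝ × ℝ → ℝ) : ℝ × ℝ → ℝ := fun p => fderiv ℝ F p (0, 1)
noncomputable def pd1 (F : ℝ × ℝ → ℝ) : ℝ × ℝ → ℝ := fun p => fderiv ℝ F p (1, 0)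

lemma hasDerivAt_pd2 (F : ℝ × ℝ → ℝ) (hF : Differentiable ℝ F) (x s : ℝ) :
    HasDerivAt (fun t => F (x, t)) (pd2 F (x, s)) s := by
  have h := (hF (x, s)).hasFDerivAt
  have hline : HasDerivAt (fun t : ℝ => ((x, t) : ℝ × ℝ)) (0, 1) s :=
    HasDerivAt.prodMk (hasDerivAt_const s x) (hasDerivAt_id s)
  exact h.comp_hasDerivAt s hline

lemma hasDerivAt_pd1 (F : ℝ × ℝ → ℝ) (hF : Differentiable ℝ F) (x s : ℝ) :
    HasDerivAt (fun y => F (y, s)) (pd1 F (x, s)) x := by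
  have h := (hF (x, s)).hasFDerivAt
  have hline : HasDerivAt (fun y : ℝ => ((y, s) : ℝ × ℝ)) (1, 0) x :=
    HasDerivAt.prodMk (hasDerivAt_id x) (hasDerivAt_const x s)
  exact h.comp_hasDerivAt x hline

lemma contDiff_pd2 {n : ℕ} (F : ℝ × ℝ → ℝ) (hF : ContDiff ℝ (n + 1) F) :
    ContDiff ℝ n (pd2 F) := by
  have h := hF.fderiv_right (m := n) (by norm_cast)
  exact h.clm_apply contDiff_const

lemma contDiff_pd1 {n : ℕ} (F : ℝ × ℝ → ℝ) (hF : ContDiff ℝ (n + 1) F) :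
    ContDiff ℝ n (pd1 F) := by
  have h := hF.fderiv_right (m := n) (by norm_cast)
  exact h.clm_apply contDiff_const


lemma hasDerivAt_intV (G G' : ℝ → ℝ → ℝ) (hG : Continuous fun p : ℝ × ℝ => G p.1 p.2)
    (hG' : Continuous fun p : ℝ × ℝ => G' p.1 p.2)
    (hdiff : ∀ x s : ℝ, HasDerivAt (fun t => G x t) (G' x s) s) (s₀ : ℝ) :
    HasDerivAt (fun s => ∫ x in (0:ℝ)..(2 * π), G x s)
      (∫ x in (0:ℝ)..(2 * π), G' x s₀) s₀ := by
  have hcont : ∀ s : ℝ, Continuous fun x => G x s := fun s =>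
    hG.comp (continuous_id.prodMk continuous_const)
  have hcont' : ∀ s : ℝ, Continuous fun x => G' x s := fun s =>
    hG'.comp (continuous_id.prodMk continuous_const)
  set K : Set (ℝ × ℝ) := (Icc (0:ℝ) (2*π)) ×ˢ (Icc (s₀ - 1) (s₀ + 1)) with hKdef
  have hK : IsCompact K := isCompact_Icc.prod isCompact_Icc
  obtain ⟨C₀, hC₀⟩ := hK.exists_bound_of_continuousOn hG'.continuousOn
  have h := intervalIntegral.hasDerivAt_integral_of_dominated_loc_of_deriv_le
    (F := fun s x => G x s) (F' := fun s x => G' x s) (x₀ := s₀)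
    (a := (0:ℝ)) (b := 2*π) (μ := volume) (bound := fun _ => C₀)
    (s := Metric.ball s₀ 1) (Metric.ball_mem_nhds s₀ one_pos)
    (Filter.Eventually.of_forall fun s => ((hcont s).aestronglyMeasurable))
    ((hcont s₀).intervalIntegrable _ _)
    ((hcont' s₀).aestronglyMeasurable)
    ?_ (intervalIntegrable_const) ?_
  · exact h.2
  · apply Filter.Eventually.of_forall
    intro x hx s hs
    have hx' : x ∈ Icc (0:ℝ) (2*π) := by
      have h2 : Set.uIoc (0:ℝ) (2*π) = Ioc 0 (2*π) := by
        rw [uIoc_of_le (by positivity)]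
      rw [h2] at hx
      exact ⟨hx.1.le, hx.2⟩
    have hs' : s ∈ Icc (s₀ - 1) (s₀ + 1) := by
      rw [Real.ball_eq_Ioo] at hs
      exact ⟨hs.1.le, hs.2.le⟩
    exact hC₀ (x, s) ⟨hx', hs'⟩
  · exact Filter.Eventually.of_forall fun x _ s _ => hdiff x s


lemma green (f f' f'' g g' g'' : ℝ → ℝ)
    (hf : ∀ x, HasDerivAt f (f' x) x) (hf' : ∀ x, HasDerivAt f' (f'' x) x)
    (hg : ∀ x, HasDerivAt g (g' x) x) (hg' : ∀ x, HasDerivAt g' (g'' x) x)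
    (cf'' : Continuous f'') (cg'' : Continuous g'')
    (pf : f (2 * π) = f 0) (pf' : f' (2 * π) = f' 0)
    (pg : g (2 * π) = g 0) (pg' : g' (2 * π) = g' 0) :
    ∫ x in (0:ℝ)..(2 * π), f'' x * g x = ∫ x in (0:ℝ)..(2 * π), f x * g'' x := by
  have cf' : Continuous f' := continuous_iff_continuousAt.2 fun x => (hf' x).continuousAt
  have cg' : Continuous g' := continuous_iff_continuousAt.2 fun x => (hg' x).continuousAt
  have cf : Continuous f := continuous_iff_continuousAt.2 fun x => (hf x).continuousAt
  have cg : Continuous g := continuous_iff_continuousAt.2 fun x => (hg x).continuousAt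
  have I1 : ∫ x in (0:ℝ)..(2*π), g x * f'' x
      = g (2*π) * f' (2*π) - g 0 * f' 0 - ∫ x in (0:ℝ)..(2*π), g' x * f' x :=
    integral_mul_deriv_eq_deriv_mul (fun x _ => hg x) (fun x _ => hf' x)
      (cg'.intervalIntegrable _ _) (cf''.intervalIntegrable _ _)
  have I2 : ∫ x in (0:ℝ)..(2*π), f x * g'' x
      = f (2*π) * g' (2*π) - f 0 * g' 0 - ∫ x in (0:ℝ)..(2*π), f' x * g' x :=
    integral_mul_deriv_eq_deriv_mul (fun x _ => hf x) (fun x _ => hg' x)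
      (cf'.intervalIntegrable _ _) (cg''.intervalIntegrable _ _)
  have e1 : ∫ x in (0:ℝ)..(2*π), f'' x * g x = ∫ x in (0:ℝ)..(2*π), g x * f'' x := by
    simp_rw [mul_comm]
  have e2 : ∫ x in (0:ℝ)..(2*π), g' x * f' x = ∫ x in (0:ℝ)..(2*π), f' x * g' x := by
    simp_rw [mul_comm]
  rw [e1, I1, I2, e2, pf, pf', pg, pg']
  ring


lemma zero_of_fourierCoeffs (f : ℝ → ℝ) (hf : Continuous f) (hp : ∀ x, f (x + 2 * π) = f x)
    (hc : ∀ n : ℕ, ∫ x in (0:ℝ)..(2 * π), f x * Real.cos (n * x) = 0)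
    (hs : ∀ n : ℕ, ∫ x in (0:ℝ)..(2 * π), f x * Real.sin (n * x) = 0) (x : ℝ) : f x = 0 := by
  haveI : Fact (0 < 2 * π) := ⟨by positivity⟩
  set g : ℝ → ℂ := fun y => (f y : ℂ) with hg
  have hper : Function.Periodic g (2 * π) := fun y => by simp [hg, hp y]
  have hcg : Continuous g := Complex.continuous_ofReal.comp hf
  have hlc : Continuous hper.lift := hcg.quotient_liftOn' _
  set F : C(AddCircle (2 * π), ℂ) := ⟨hper.lift, hlc⟩ with hF
  have hFy : ∀ y : ℝ, (⇑F) ((y : ℝ) : AddCircle (2*π)) = (f y : ℂ) := fun y =>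
    hper.lift_coe y
  have hcZ : ∀ n : ℤ, ∫ y in (0:ℝ)..(2 * π), f y * Real.cos (n * y) = 0 := by
    intro n
    obtain ⟨m, rfl | rfl⟩ := n.eq_nat_or_neg
    · exact_mod_cast hc m
    · have he : ∀ y : ℝ, f y * Real.cos (((-(m:ℤ) : ℤ) : ℝ) * y) =
          f y * Real.cos ((m : ℝ) * y) := by
        intro y; push_cast; rw [neg_mul, Real.cos_neg]
      simp only [he]
      exact hc m
  have hsZ : ∀ n : ℤ, ∫ y in (0:ℝ)..(2 * π), f y * Real.sin (n * y) = 0 := by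
    intro n
    obtain ⟨m, rfl | rfl⟩ := n.eq_nat_or_neg
    · exact_mod_cast hs m
    · have he : ∀ y : ℝ, f y * Real.sin (((-(m:ℤ) : ℤ) : ℝ) * y) =
          -(f y * Real.sin ((m : ℝ) * y)) := by
        intro y; push_cast; rw [neg_mul, Real.sin_neg]; ring
      simp only [he]
      rw [intervalIntegral.integral_neg, neg_eq_zero]
      exact hs m
  have hcoeff : ∀ n : ℤ, fourierCoeff (⇑F) n = 0 := by
    intro n
    rw [fourierCoeff_eq_intervalIntegral (⇑F) n 0]
    have hint : ∀ y : ℝ, (fourier (-n) (y : AddCircle (2 * π)) : ℂ) • (⇑F) ((y:ℝ) : AddCircle (2*π))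
        = ((f y * Real.cos (n * y) : ℝ) : ℂ) - ((f y * Real.sin (n * y) : ℝ) : ℂ) * Complex.I := by
      intro y
      rw [smul_eq_mul, hFy y, fourier_coe_apply]
      have hπ : (π : ℂ) ≠ 0 := by exact_mod_cast Real.pi_ne_zero
      have harg : 2 * (π:ℂ) * Complex.I * ((-n : ℤ) : ℂ) * (y:ℂ) / ((2 * π : ℝ) : ℂ)
          = ((-(n * y) : ℝ) : ℂ) * Complex.I := by
        push_cast
        field_simp
      rw [harg, Complex.exp_mul_I]
      rw [← Complex.ofReal_cos, ← Complex.ofReal_sin, Real.cos_neg, Real.sin_neg]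
      push_cast
      ring
    have c1 : Continuous fun y : ℝ => f y * Real.cos (n * y) :=
      hf.mul (Real.continuous_cos.comp (continuous_const.mul continuous_id))
    have c2 : Continuous fun y : ℝ => f y * Real.sin (n * y) :=
      hf.mul (Real.continuous_sin.comp (continuous_const.mul continuous_id))
    have hzero : ∫ y in (0:ℝ)..(0 + 2*π), (fourier (-n) (y : AddCircle (2*π)) : ℂ) •
        (⇑F) ((y:ℝ) : AddCircle (2*π)) = 0 := by
      rw [zero_add]
      simp only [hint]
      rw [intervalIntegral.integral_sub, intervalIntegral.integral_mul_const,
        intervalIntegral.integral_ofReal, intervalIntegral.integral_ofReal, hcZ n, hsZ n]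
      · simp
      · exact (Complex.continuous_ofReal.comp c1).intervalIntegrable _ _
      · exact ((Complex.continuous_ofReal.comp c2).mul continuous_const).intervalIntegrable _ _
    rw [hzero, smul_zero]
  have hFzero : F = 0 := by
    have hsummable : Summable (fourierCoeff (⇑F)) := by
      have he : (fourierCoeff (⇑F)) = fun _ => 0 := funext hcoeff
      rw [he]; exact summable_zero
    have hs2 := hasSum_fourier_series_of_summable (f := F) hsummable
    simp only [hcoeff, zero_smul] at hs2
    exact hs2.unique hasSum_zero
  have hz : (⇑F) ((x : ℝ) : AddCircle (2*π)) = 0 := by rw [hFzero]; rfl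
  rw [hFy x] at hz
  exact_mod_cast hz


/-- A `C²`, `2π`-periodic function on the half-cylinder `{s ≤ 0}`,
harmonic for `s < 0`, decaying like `e^{(1+γ)s}`, whose trace on `{s = 0}` is a lower
mode, vanishes identically on `{s ≤ 0}`. -/
theorem harmonic_half_cylinder_vanishing
    (γ C : ℝ) (hγ : γ ∈ Set.Ioo (0 : ℝ) 1) (hC : 0 < C)
    (u : ℝ → ℝ → ℝ)
    (hreg : ContDiff ℝ 2 (fun p : ℝ × ℝ => u p.1 p.2))
    (hper : ∀ x s : ℝ, u (x + 2 * Real.pi) s = u x s)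
    (hharm : ∀ x s : ℝ, s < 0 →
      iteratedDeriv 2 (fun x' => u x' s) x
        + iteratedDeriv 2 (fun s' => u x s') s = 0)
    (hbound : ∀ x s : ℝ, s ≤ 0 → |u x s| ≤ C * Real.exp ((1 + γ) * s))
    (a b c : ℝ)
    (htrace : ∀ x : ℝ, u x 0 = a + b * Real.cos x + c * Real.sin x) :
    ∀ x s : ℝ, s ≤ 0 → u x s = 0 := by
  obtain ⟨hγ0, hγ1⟩ := hγ
  set μ : ℝ := 1 + γ with hμdef
  have hμpos : 0 < μ := by simp only [hμdef]; linarith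
  set F : ℝ × ℝ → ℝ := fun p => u p.1 p.2 with hFdef
  have hFd : Differentiable ℝ F := hreg.differentiable (by norm_num)
  have hF1 : ContDiff ℝ 1 (pd1 F) := contDiff_pd1 (n := 1) F (by exact_mod_cast hreg)
  have hF2 : ContDiff ℝ 1 (pd2 F) := contDiff_pd2 (n := 1) F (by exact_mod_cast hreg)
  have hF1d : Differentiable ℝ (pd1 F) := hF1.differentiable (by norm_num)
  have hF2d : Differentiable ℝ (pd2 F) := hF2.differentiable (by norm_num)
  have c0 : Continuous F := hreg.continuous
  have c2 : Continuous (pd2 F) := hF2.continuous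
  have c22 : Continuous (pd2 (pd2 F)) :=
    (contDiff_pd2 (n := 0) (pd2 F) (by exact_mod_cast hF2)).continuous
  have c11 : Continuous (pd1 (pd1 F)) :=
    (contDiff_pd1 (n := 0) (pd1 F) (by exact_mod_cast hF1)).continuous
  have hax : ∀ x s : ℝ, HasDerivAt (fun y => u y s) (pd1 F (x, s)) x := fun x s =>
    hasDerivAt_pd1 F hFd x s
  have haxx : ∀ x s : ℝ, HasDerivAt (fun y => pd1 F (y, s)) (pd1 (pd1 F) (x, s)) x := fun x s =>
    hasDerivAt_pd1 (pd1 F) hF1d x s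
  have has : ∀ x s : ℝ, HasDerivAt (fun t => u x t) (pd2 F (x, s)) s := fun x s =>
    hasDerivAt_pd2 F hFd x s
  have hass : ∀ x s : ℝ, HasDerivAt (fun t => pd2 F (x, t)) (pd2 (pd2 F) (x, s)) s := fun x s =>
    hasDerivAt_pd2 (pd2 F) hF2d x s
  -- harmonicity in terms of partial derivatives
  have hharm' : ∀ x s : ℝ, s < 0 → pd1 (pd1 F) (x, s) + pd2 (pd2 F) (x, s) = 0 := by
    intro x s hs
    have h1 : iteratedDeriv 2 (fun x' => u x' s) x = pd1 (pd1 F) (x, s) := by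
      rw [iteratedDeriv_succ, iteratedDeriv_one]
      have e1 : deriv (fun x' => u x' s) = fun y => pd1 F (y, s) := funext fun y => (hax y s).deriv
      rw [e1]
      exact (haxx x s).deriv
    have h2 : iteratedDeriv 2 (fun s' => u x s') s = pd2 (pd2 F) (x, s) := by
      rw [iteratedDeriv_succ, iteratedDeriv_one]
      have e1 : deriv (fun t => u x t) = fun t => pd2 F (x, t) := funext fun t => (has x t).deriv
      rw [e1]
      exact (hass x s).deriv
    rw [← h1, ← h2]
    exact hharm x s hs
  -- periodicity of the x-derivative
  have hper1 : ∀ x s : ℝ, pd1 F (x + 2 * π, s) = pd1 F (x, s) := by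
    intro x s
    have hinner : HasDerivAt (fun y : ℝ => y + 2 * π) 1 x := (hasDerivAt_id x).add_const _
    have h1 := HasDerivAt.comp x (hax (x + 2 * π) s) hinner
    simp only [Function.comp_def, mul_one] at h1
    have h2 : (fun y => u (y + 2 * π) s) = fun y => u y s := funext fun y => hper y s
    rw [h2] at h1
    exact h1.unique (hax x s)
  -- derivative of the Fourier coefficients
  have keyD : ∀ e : ℝ → ℝ, Continuous e → ∀ s₀ : ℝ,
      HasDerivAt (fun s => ∫ x in (0:ℝ)..(2 * π), u x s * e x)
        (∫ x in (0:ℝ)..(2 * π), pd2 F (x, s₀) * e x) s₀ := by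
    intro e ce s₀
    apply hasDerivAt_intV (G := fun x s => u x s * e x) (G' := fun x s => pd2 F (x, s) * e x)
    · exact c0.mul (ce.comp continuous_fst)
    · exact (c2.comp (continuous_fst.prodMk continuous_snd)).mul (ce.comp continuous_fst)
    · intro x s; exact (has x s).mul_const (e x)
  have keyD2 : ∀ e : ℝ → ℝ, Continuous e → ∀ s₀ : ℝ,
      HasDerivAt (fun s => ∫ x in (0:ℝ)..(2 * π), pd2 F (x, s) * e x)
        (∫ x in (0:ℝ)..(2 * π), pd2 (pd2 F) (x, s₀) * e x) s₀ := by
    intro e ce s₀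
    apply hasDerivAt_intV (G := fun x s => pd2 F (x, s) * e x)
      (G' := fun x s => pd2 (pd2 F) (x, s) * e x)
    · exact (c2.comp (continuous_fst.prodMk continuous_snd)).mul (ce.comp continuous_fst)
    · exact (c22.comp (continuous_fst.prodMk continuous_snd)).mul (ce.comp continuous_fst)
    · intro x s; exact (hass x s).mul_const (e x)
  -- the Green identity converting x-derivatives
  have hgreen : ∀ (e e1 : ℝ → ℝ) (n : ℕ), (∀ x, HasDerivAt e (e1 x) x) →
      (∀ x, HasDerivAt e1 (-((n:ℝ)^2) * e x) x) → Continuous e →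
      e (2 * π) = e 0 → e1 (2 * π) = e1 0 → ∀ s : ℝ, s < 0 →
      (∫ x in (0:ℝ)..(2 * π), pd2 (pd2 F) (x, s) * e x)
        = (n:ℝ)^2 * ∫ x in (0:ℝ)..(2 * π), u x s * e x := by
    intro e e1 n hde hde1 ce pe pe1 s hs
    have c11s : Continuous fun x => pd1 (pd1 F) (x, s) :=
      c11.comp (continuous_id.prodMk continuous_const)
    have ce2 : Continuous fun x => -((n:ℝ)^2) * e x := continuous_const.mul ce
    have pf : u (2 * π) s = u 0 s := by
      have := hper 0 s; rwa [zero_add] at this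
    have pf' : pd1 F (2 * π, s) = pd1 F (0, s) := by
      have := hper1 0 s; rwa [zero_add] at this
    have hg := green (fun x => u x s) (fun x => pd1 F (x, s)) (fun x => pd1 (pd1 F) (x, s))
      e e1 (fun x => -((n:ℝ)^2) * e x)
      (fun x => hax x s) (fun x => haxx x s) hde hde1 c11s ce2 pf pf' pe pe1
    have h22 : ∀ x : ℝ, pd2 (pd2 F) (x, s) * e x = -(pd1 (pd1 F) (x, s) * e x) := by
      intro x
      have hh := hharm' x s hs
      linear_combination (e x) * hh
    calc (∫ x in (0:ℝ)..(2 * π), pd2 (pd2 F) (x, s) * e x)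
        = ∫ x in (0:ℝ)..(2 * π), -(pd1 (pd1 F) (x, s) * e x) := by simp_rw [h22]
      _ = -(∫ x in (0:ℝ)..(2 * π), pd1 (pd1 F) (x, s) * e x) := intervalIntegral.integral_neg
      _ = -(∫ x in (0:ℝ)..(2 * π), u x s * (-((n:ℝ)^2) * e x)) := by rw [hg]
      _ = -(∫ x in (0:ℝ)..(2 * π), -((n:ℝ)^2) * (u x s * e x)) := by
          congr 1; apply intervalIntegral.integral_congr; intro x _; ring
      _ = -(-((n:ℝ)^2) * ∫ x in (0:ℝ)..(2 * π), u x s * e x) := by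
          rw [intervalIntegral.integral_const_mul]
      _ = (n:ℝ)^2 * ∫ x in (0:ℝ)..(2 * π), u x s * e x := by ring
  -- uniform bound on each coefficient
  have bnd : ∀ e : ℝ → ℝ, (∀ x, |e x| ≤ 1) → ∀ s ≤ (0:ℝ),
      |∫ x in (0:ℝ)..(2 * π), u x s * e x| ≤ (2 * π * C) * Real.exp (μ * s) := by
    intro e he s hs
    have h1 : ∀ x ∈ Set.uIoc (0:ℝ) (2 * π), ‖u x s * e x‖ ≤ C * Real.exp (μ * s) := by
      intro x _
      rw [Real.norm_eq_abs, abs_mul]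
      calc |u x s| * |e x| ≤ (C * Real.exp (μ * s)) * 1 := by
            apply mul_le_mul _ (he x) (abs_nonneg _) (by positivity)
            simpa [hμdef] using hbound x s hs
        _ = C * Real.exp (μ * s) := mul_one _
    have h2 := intervalIntegral.norm_integral_le_of_norm_le_const h1
    rw [Real.norm_eq_abs] at h2
    calc |∫ x in (0:ℝ)..(2 * π), u x s * e x| ≤ (C * Real.exp (μ * s)) * |2 * π - 0| := h2
      _ = (2 * π * C) * Real.exp (μ * s) := by
          rw [sub_zero, abs_of_pos (by positivity : (0:ℝ) < 2 * π)]; ring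
  -- trigonometric derivative helpers
  have hdcos : ∀ (n : ℕ) (x : ℝ), HasDerivAt (fun y => Real.cos ((n:ℝ) * y))
      (-(n:ℝ) * Real.sin ((n:ℝ) * x)) x := by
    intro n x
    have := (Real.hasDerivAt_cos ((n:ℝ) * x)).comp x ((hasDerivAt_id x).const_mul (n:ℝ))
    refine this.congr_deriv (Eq.symm ?_)
    simp [mul_comm]
  have hdcos' : ∀ (n : ℕ) (x : ℝ), HasDerivAt (fun y => -(n:ℝ) * Real.sin ((n:ℝ) * y))
      (-((n:ℝ)^2) * Real.cos ((n:ℝ) * x)) x := by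
    intro n x
    have := ((Real.hasDerivAt_sin ((n:ℝ) * x)).comp x
      ((hasDerivAt_id x).const_mul (n:ℝ))).const_mul (-(n:ℝ))
    refine this.congr_deriv (Eq.symm ?_)
    simp; ring
  have hdsin : ∀ (n : ℕ) (x : ℝ), HasDerivAt (fun y => Real.sin ((n:ℝ) * y))
      ((n:ℝ) * Real.cos ((n:ℝ) * x)) x := by
    intro n x
    have := (Real.hasDerivAt_sin ((n:ℝ) * x)).comp x ((hasDerivAt_id x).const_mul (n:ℝ))
    refine this.congr_deriv (Eq.symm ?_)
    simp [mul_comm]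
  have hdsin' : ∀ (n : ℕ) (x : ℝ), HasDerivAt (fun y => (n:ℝ) * Real.cos ((n:ℝ) * y))
      (-((n:ℝ)^2) * Real.sin ((n:ℝ) * x)) x := by
    intro n x
    have := ((Real.hasDerivAt_cos ((n:ℝ) * x)).comp x
      ((hasDerivAt_id x).const_mul (n:ℝ))).const_mul ((n:ℝ))
    refine this.congr_deriv (Eq.symm ?_)
    simp; ring
  have hsin2pi : ∀ n : ℕ, Real.sin ((n:ℝ) * (2 * π)) = 0 := by
    intro n
    have : (n:ℝ) * (2 * π) = ((2 * n : ℕ) : ℝ) * π := by push_cast; ring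
    rw [this, Real.sin_nat_mul_pi]
  have hcos2pi : ∀ n : ℕ, Real.cos ((n:ℝ) * (2 * π)) = 1 := Real.cos_nat_mul_two_pi
  have pecos : ∀ n : ℕ, Real.cos ((n:ℝ) * (2 * π)) = Real.cos ((n:ℝ) * 0) := by
    intro n; rw [hcos2pi n]; simp
  have pesin : ∀ n : ℕ, Real.sin ((n:ℝ) * (2 * π)) = Real.sin ((n:ℝ) * 0) := by
    intro n; rw [hsin2pi n]; simp
  have ccos : ∀ n : ℕ, Continuous fun x => Real.cos ((n:ℝ) * x) := fun n =>
    Real.continuous_cos.comp (continuous_const.mul continuous_id)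
  have csin : ∀ n : ℕ, Continuous fun x => Real.sin ((n:ℝ) * x) := fun n =>
    Real.continuous_sin.comp (continuous_const.mul continuous_id)
  -- vanishing of coefficients : n = 0 (cosine = 1)
  have mode0 : ∀ s ≤ (0:ℝ), (∫ x in (0:ℝ)..(2 * π), u x s * Real.cos ((0:ℕ) * x)) = 0 := by
    apply ode_vanish_zero μ (2 * π * C) hμpos _
      (fun s => ∫ x in (0:ℝ)..(2 * π), pd2 F (x, s) * Real.cos (((0:ℕ):ℝ) * x))
    · exact fun s => keyD _ (ccos 0) s
    · intro s hs
      have h := keyD2 _ (ccos 0) s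
      have hg := hgreen _ _ 0 (hdcos 0) (hdcos' 0) (ccos 0) (pecos 0) (by simp) s hs
      rw [hg] at h
      simpa using h
    · intro s hs
      exact bnd _ (fun x => Real.abs_cos_le_one _) s hs
  -- vanishing of coefficients : cosine modes n ≥ 1
  have modeC : ∀ n : ℕ, 1 ≤ n →
      ((n:ℝ) < μ ∨ (∫ x in (0:ℝ)..(2 * π), u x 0 * Real.cos ((n:ℝ) * x)) = 0) →
      ∀ s ≤ (0:ℝ), (∫ x in (0:ℝ)..(2 * π), u x s * Real.cos ((n:ℝ) * x)) = 0 := by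
    intro n hn hbr
    apply ode_vanish (n:ℝ) μ (2 * π * C) (by exact_mod_cast hn) hμpos _
      (fun s => ∫ x in (0:ℝ)..(2 * π), pd2 F (x, s) * Real.cos ((n:ℝ) * x))
    · exact fun s => keyD _ (ccos n) s
    · intro s hs
      have h := keyD2 _ (ccos n) s
      have pe1c : -(n:ℝ) * Real.sin ((n:ℝ) * (2 * π)) = -(n:ℝ) * Real.sin ((n:ℝ) * 0) := by
        rw [hsin2pi n]; simp
      have hg := hgreen _ _ n (hdcos n) (hdcos' n) (ccos n) (pecos n) pe1c s hs
      rw [hg] at h; exact h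
    · intro s hs; exact bnd _ (fun x => Real.abs_cos_le_one _) s hs
    · exact hbr
  -- vanishing of coefficients : sine modes n ≥ 1
  have modeS : ∀ n : ℕ, 1 ≤ n →
      ((n:ℝ) < μ ∨ (∫ x in (0:ℝ)..(2 * π), u x 0 * Real.sin ((n:ℝ) * x)) = 0) →
      ∀ s ≤ (0:ℝ), (∫ x in (0:ℝ)..(2 * π), u x s * Real.sin ((n:ℝ) * x)) = 0 := by
    intro n hn hbr
    apply ode_vanish (n:ℝ) μ (2 * π * C) (by exact_mod_cast hn) hμpos _
      (fun s => ∫ x in (0:ℝ)..(2 * π), pd2 F (x, s) * Real.sin ((n:ℝ) * x))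
    · exact fun s => keyD _ (csin n) s
    · intro s hs
      have h := keyD2 _ (csin n) s
      have pe1s : (n:ℝ) * Real.cos ((n:ℝ) * (2 * π)) = (n:ℝ) * Real.cos ((n:ℝ) * 0) := by
        rw [hcos2pi n]; simp
      have hg := hgreen _ _ n (hdsin n) (hdsin' n) (csin n) (pesin n) pe1s s hs
      rw [hg] at h; exact h
    · intro s hs; exact bnd _ (fun x => Real.abs_sin_le_one _) s hs
    · exact hbr
  -- trace integrals
  have intcos : (∫ x in (0:ℝ)..(2 * π), Real.cos x) = 0 := by
    rw [integral_cos]; simp [Real.sin_two_pi]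
  have intsin : (∫ x in (0:ℝ)..(2 * π), Real.sin x) = 0 := by
    rw [integral_sin]; simp [Real.cos_two_pi]
  have intcos2 : (∫ x in (0:ℝ)..(2 * π), Real.cos x ^ 2) = π := by
    rw [integral_cos_sq]; simp [Real.sin_two_pi, Real.cos_two_pi]
  have intsin2 : (∫ x in (0:ℝ)..(2 * π), Real.sin x ^ 2) = π := by
    rw [integral_sin_sq]; simp [Real.sin_two_pi, Real.cos_two_pi]
  have intsincos : (∫ x in (0:ℝ)..(2 * π), Real.sin x * Real.cos x) = 0 := by
    rw [integral_sin_mul_cos₁]; simp [Real.sin_two_pi]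
  have iab : IntervalIntegrable (fun x => a + b * Real.cos x) volume 0 (2 * π) :=
    (continuous_const.add (continuous_const.mul Real.continuous_cos)).intervalIntegrable _ _
  have icsin : IntervalIntegrable (fun x => c * Real.sin x) volume 0 (2 * π) :=
    (continuous_const.mul Real.continuous_sin).intervalIntegrable _ _
  have ia : IntervalIntegrable (fun _ : ℝ => a) volume 0 (2 * π) :=
    intervalIntegrable_const
  have ibc : IntervalIntegrable (fun x => b * Real.cos x) volume 0 (2 * π) :=
    (continuous_const.mul Real.continuous_cos).intervalIntegrable _ _
  have tr1 : (∫ x in (0:ℝ)..(2 * π), (a + b * Real.cos x + c * Real.sin x)) = 2 * π * a := by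
    rw [intervalIntegral.integral_add iab icsin, intervalIntegral.integral_add ia ibc,
      intervalIntegral.integral_const, intervalIntegral.integral_const_mul,
      intervalIntegral.integral_const_mul, intcos, intsin]
    simp [smul_eq_mul]
  have tr2 : (∫ x in (0:ℝ)..(2 * π), (a + b * Real.cos x + c * Real.sin x) * Real.cos x)
      = π * b := by
    have he : ∀ x : ℝ, (a + b * Real.cos x + c * Real.sin x) * Real.cos x
        = a * Real.cos x + b * Real.cos x ^ 2 + c * (Real.sin x * Real.cos x) := fun x => by ring
    have i1 : IntervalIntegrable (fun x => a * Real.cos x) volume 0 (2 * π) :=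
      (continuous_const.mul Real.continuous_cos).intervalIntegrable _ _
    have i2 : IntervalIntegrable (fun x => b * Real.cos x ^ 2) volume 0 (2 * π) :=
      (continuous_const.mul (Real.continuous_cos.pow 2)).intervalIntegrable _ _
    have i3 : IntervalIntegrable (fun x => c * (Real.sin x * Real.cos x)) volume 0 (2 * π) :=
      (continuous_const.mul (Real.continuous_sin.mul Real.continuous_cos)).intervalIntegrable _ _
    simp_rw [he]
    rw [intervalIntegral.integral_add (i1.add i2) i3, intervalIntegral.integral_add i1 i2,
      intervalIntegral.integral_const_mul, intervalIntegral.integral_const_mul,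
      intervalIntegral.integral_const_mul, intcos, intcos2, intsincos]
    ring
  have tr3 : (∫ x in (0:ℝ)..(2 * π), (a + b * Real.cos x + c * Real.sin x) * Real.sin x)
      = π * c := by
    have he : ∀ x : ℝ, (a + b * Real.cos x + c * Real.sin x) * Real.sin x
        = a * Real.sin x + c * Real.sin x ^ 2 + b * (Real.sin x * Real.cos x) := fun x => by ring
    have i1 : IntervalIntegrable (fun x => a * Real.sin x) volume 0 (2 * π) :=
      (continuous_const.mul Real.continuous_sin).intervalIntegrable _ _
    have i2 : IntervalIntegrable (fun x => c * Real.sin x ^ 2) volume 0 (2 * π) :=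
      (continuous_const.mul (Real.continuous_sin.pow 2)).intervalIntegrable _ _
    have i3 : IntervalIntegrable (fun x => b * (Real.sin x * Real.cos x)) volume 0 (2 * π) :=
      (continuous_const.mul (Real.continuous_sin.mul Real.continuous_cos)).intervalIntegrable _ _
    simp_rw [he]
    rw [intervalIntegral.integral_add (i1.add i2) i3, intervalIntegral.integral_add i1 i2,
      intervalIntegral.integral_const_mul, intervalIntegral.integral_const_mul,
      intervalIntegral.integral_const_mul, intsin, intsin2, intsincos]
    ring
  have htrInt : ∀ g : ℝ → ℝ, (∫ x in (0:ℝ)..(2 * π), u x 0 * g x)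
      = ∫ x in (0:ℝ)..(2 * π), (a + b * Real.cos x + c * Real.sin x) * g x := by
    intro g
    apply intervalIntegral.integral_congr
    intro x _
    show u x 0 * g x = _
    rw [htrace x]
  -- a = 0
  have hpi : (0:ℝ) < π := Real.pi_pos
  have ha : a = 0 := by
    have h0 := mode0 0 le_rfl
    have h1 : (∫ x in (0:ℝ)..(2 * π), u x 0 * Real.cos ((0:ℕ) * x))
        = ∫ x in (0:ℝ)..(2 * π), (a + b * Real.cos x + c * Real.sin x) := by
      rw [htrInt (fun x => Real.cos ((0:ℕ) * x))]
      apply intervalIntegral.integral_congr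
      intro x _
      simp
    rw [h1, tr1] at h0
    nlinarith
  have hb : b = 0 := by
    have h0 := modeC 1 le_rfl (Or.inl (by simp only [hμdef]; push_cast; linarith)) 0 le_rfl
    have h1 : (∫ x in (0:ℝ)..(2 * π), u x 0 * Real.cos (((1:ℕ):ℝ) * x))
        = ∫ x in (0:ℝ)..(2 * π), (a + b * Real.cos x + c * Real.sin x) * Real.cos x := by
      rw [htrInt (fun x => Real.cos (((1:ℕ):ℝ) * x))]
      apply intervalIntegral.integral_congr
      intro x _
      simp
    rw [h1, tr2] at h0
    nlinarith
  have hcz : c = 0 := by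
    have h0 := modeS 1 le_rfl (Or.inl (by simp only [hμdef]; push_cast; linarith)) 0 le_rfl
    have h1 : (∫ x in (0:ℝ)..(2 * π), u x 0 * Real.sin (((1:ℕ):ℝ) * x))
        = ∫ x in (0:ℝ)..(2 * π), (a + b * Real.cos x + c * Real.sin x) * Real.sin x := by
      rw [htrInt (fun x => Real.sin (((1:ℕ):ℝ) * x))]
      apply intervalIntegral.integral_congr
      intro x _
      simp
    rw [h1, tr3] at h0
    nlinarith
  have htr0 : ∀ x : ℝ, u x 0 = 0 := by
    intro x; rw [htrace x, ha, hb, hcz]; ring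
  -- all Fourier coefficients vanish
  have coeffC : ∀ n : ℕ, ∀ s ≤ (0:ℝ), (∫ x in (0:ℝ)..(2 * π), u x s * Real.cos ((n:ℝ) * x)) = 0 := by
    intro n
    cases n with
    | zero => exact_mod_cast mode0
    | succ m =>
      apply modeC (m + 1) (Nat.le_add_left 1 m)
      right
      have hz : (∫ x in (0:ℝ)..(2 * π), u x 0 * Real.cos (((m+1:ℕ):ℝ) * x))
          = ∫ x in (0:ℝ)..(2 * π), (0:ℝ) := by
        apply intervalIntegral.integral_congr
        intro x _
        show u x 0 * _ = (0:ℝ)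
        rw [htr0 x, zero_mul]
      rw [hz, intervalIntegral.integral_zero]
  have coeffS : ∀ n : ℕ, ∀ s ≤ (0:ℝ), (∫ x in (0:ℝ)..(2 * π), u x s * Real.sin ((n:ℝ) * x)) = 0 := by
    intro n
    cases n with
    | zero =>
      intro s hs
      have hz : (∫ x in (0:ℝ)..(2 * π), u x s * Real.sin (((0:ℕ):ℝ) * x))
          = ∫ x in (0:ℝ)..(2 * π), (0:ℝ) := by
        apply intervalIntegral.integral_congr
        intro x _
        show u x s * _ = (0:ℝ)
        simp
      rw [hz, intervalIntegral.integral_zero]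
    | succ m =>
      apply modeS (m + 1) (Nat.le_add_left 1 m)
      right
      have hz : (∫ x in (0:ℝ)..(2 * π), u x 0 * Real.sin (((m+1:ℕ):ℝ) * x))
          = ∫ x in (0:ℝ)..(2 * π), (0:ℝ) := by
        apply intervalIntegral.integral_congr
        intro x _
        show u x 0 * _ = (0:ℝ)
        rw [htr0 x, zero_mul]
      rw [hz, intervalIntegral.integral_zero]
  -- conclude via completeness of the Fourier system
  intro x s hs
  have hcont : Continuous fun y => u y s :=
    c0.comp (continuous_id.prodMk continuous_const)
  exact zero_of_fourierCoeffs (fun y => u y s) hcont (fun y => hper y s)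
    (fun n => coeffC n s hs) (fun n => coeffS n s hs) x
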